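/- Let (C,V,J) be a J²C-module and W = C ⊕ V. Every linear C-subspace E of W (an ℝ-linear subspace containing Cw for each nonzero w ∈ E) has an orthogonal complement in W which is again a linear C-subspace, and E is an orthogonal direct sum of C-lines through 0. -/

import Mathlib

open scoped RealInnerProductSpace


section Aux
variable {C V : Type*} [NormedAddCommGroup C] [InnerProductSpace ℝ C]
    [NormedAddCommGroup V] [InnerProductSpace ℝ V]

theorem jP1 (J : C →ₗ[ℝ] V →ₗ[ℝ] V) (hJnorm : ∀ (ζ : C) (v : V), ‖J ζ v‖ = ‖ζ‖ * ‖v‖)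
    (ζ : C) (v w : V) : ⟪J ζ v, J ζ w⟫ = ‖ζ‖ ^ 2 * ⟪v, w⟫ := by
  have key : ∀ u : V, ⟪J ζ u, J ζ u⟫ = ‖ζ‖ ^ 2 * ⟪u, u⟫ := by
    intro u
    rw [real_inner_self_eq_norm_sq, real_inner_self_eq_norm_sq, hJnorm]
    ring
  have h1 := key (v + w)
  have h2 := key v
  have h3 := key w
  rw [map_add, real_inner_add_add_self, real_inner_add_add_self] at h1
  linarith

theorem jP2 (J : C →ₗ[ℝ] V →ₗ[ℝ] V) (hJnorm : ∀ (ζ : C) (v : V), ‖J ζ v‖ = ‖ζ‖ * ‖v‖)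
    (ζ η : C) (v w : V) :
    ⟪J ζ v, J η w⟫ + ⟪J η v, J ζ w⟫ = 2 * ⟪ζ, η⟫ * ⟪v, w⟫ := by
  have h1 := jP1 J hJnorm (ζ + η) v w
  have h2 := jP1 J hJnorm ζ v w
  have h3 := jP1 J hJnorm η v w
  have hn : ‖ζ + η‖ ^ 2 = ‖ζ‖ ^ 2 + 2 * ⟪ζ, η⟫ + ‖η‖ ^ 2 := by
    rw [← real_inner_self_eq_norm_sq, ← real_inner_self_eq_norm_sq, ← real_inner_self_eq_norm_sq,
      real_inner_add_add_self]
  rw [map_add, LinearMap.add_apply, LinearMap.add_apply, inner_add_left, inner_add_right,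
    inner_add_right, hn] at h1
  have hsymm : ⟪J η v, J ζ w⟫ = ⟪J ζ w, J η v⟫ := real_inner_comm _ _
  have hsymm2 : ⟪J ζ v, J η w⟫ = ⟪J η w, J ζ v⟫ := real_inner_comm _ _
  nlinarith [h1, h2, h3]

theorem jP3 (J : C →ₗ[ℝ] V →ₗ[ℝ] V) (hJnorm : ∀ (ζ : C) (v : V), ‖J ζ v‖ = ‖ζ‖ * ‖v‖)
    (α β : C) (u : V) : ⟪J α u, J β u⟫ = ⟪α, β⟫ * ‖u‖ ^ 2 := by
  have h := jP2 J hJnorm α β u u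
  have hs : ⟪J β u, J α u⟫ = ⟪J α u, J β u⟫ := real_inner_comm _ _
  rw [hs, real_inner_self_eq_norm_sq] at h
  linarith

theorem jI1 (e : C) (J : C →ₗ[ℝ] V →ₗ[ℝ] V) (hJ1 : ∀ v : V, J e v = v)
    (hJnorm : ∀ (ζ : C) (v : V), ‖J ζ v‖ = ‖ζ‖ * ‖v‖)
    (ζ : C) (v w : V) : ⟪J ζ v, w⟫ + ⟪v, J ζ w⟫ = 2 * ⟪ζ, e⟫ * ⟪v, w⟫ := by
  have h := jP2 J hJnorm ζ e v w
  rwa [hJ1, hJ1] at h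
end Aux



section Aux2
variable {C V : Type*} [NormedAddCommGroup C] [InnerProductSpace ℝ C]
    [NormedAddCommGroup V] [InnerProductSpace ℝ V]

theorem jee (e : C) (he : ‖e‖ = 1) : ⟪e, e⟫ = (1:ℝ) := by
  rw [real_inner_self_eq_norm_sq, he]; norm_num

theorem jconj_e (e : C) (he : ‖e‖ = 1) (ζ : C) :
    ⟪(2 * ⟪ζ, e⟫) • e - ζ, e⟫ = ⟪ζ, e⟫ := by
  rw [inner_sub_left, real_inner_smul_left, jee e he]; ring

theorem jconj_conj (e : C) (he : ‖e‖ = 1) (ζ : C) :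
    (2 * ⟪(2 * ⟪ζ, e⟫) • e - ζ, e⟫) • e - ((2 * ⟪ζ, e⟫) • e - ζ) = ζ := by
  rw [jconj_e e he]; abel

theorem jconj_norm (e : C) (he : ‖e‖ = 1) (ζ : C) : ‖(2 * ⟪ζ, e⟫) • e - ζ‖ = ‖ζ‖ := by
  have h : ⟪(2 * ⟪ζ, e⟫) • e - ζ, (2 * ⟪ζ, e⟫) • e - ζ⟫ = ⟪ζ, ζ⟫ := by
    simp only [inner_sub_sub_self, real_inner_smul_left, real_inner_smul_right, jee e he, mul_one]
    rw [real_inner_comm e ζ]; ring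
  rw [real_inner_self_eq_norm_sq, real_inner_self_eq_norm_sq] at h
  calc ‖(2 * ⟪ζ, e⟫) • e - ζ‖ = √(‖(2 * ⟪ζ, e⟫) • e - ζ‖ ^ 2) := (Real.sqrt_sq (norm_nonneg _)).symm
    _ = √(‖ζ‖ ^ 2) := by rw [h]
    _ = ‖ζ‖ := Real.sqrt_sq (norm_nonneg _)

theorem jI2 (e : C) (J : C →ₗ[ℝ] V →ₗ[ℝ] V) (hJ1 : ∀ v : V, J e v = v)
    (hJnorm : ∀ (ζ : C) (v : V), ‖J ζ v‖ = ‖ζ‖ * ‖v‖) (ζ : C) (v : V) :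
    J ((2 * ⟪ζ, e⟫) • e - ζ) (J ζ v) = ‖ζ‖ ^ 2 • v := by
  apply ext_inner_left ℝ
  intro w
  have expand : J ((2 * ⟪ζ, e⟫) • e - ζ) (J ζ v)
      = (2 * ⟪ζ, e⟫) • (J ζ v) - J ζ (J ζ v) := by
    rw [map_sub, map_smul]
    simp [hJ1]
  rw [expand, inner_sub_right, real_inner_smul_right]
  have h1 := jI1 e J hJ1 hJnorm ζ w (J ζ v)
  have h2 := jP1 J hJnorm ζ w v
  rw [real_inner_smul_right]
  linarith

theorem jInv1 (e : C) (J : C →ₗ[ℝ] V →ₗ[ℝ] V) (hJ1 : ∀ v : V, J e v = v)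
    (hJnorm : ∀ (ζ : C) (v : V), ‖J ζ v‖ = ‖ζ‖ * ‖v‖) (ζ : C) (hζ : ζ ≠ 0) (v : V) :
    J ((‖ζ‖ ^ 2)⁻¹ • ((2 * ⟪ζ, e⟫) • e - ζ)) (J ζ v) = v := by
  rw [map_smul, LinearMap.smul_apply, jI2 e J hJ1 hJnorm ζ v]
  rw [smul_smul, inv_mul_cancel₀ (pow_ne_zero 2 (norm_ne_zero_iff.mpr hζ)), one_smul]

theorem jInv2 (e : C) (he : ‖e‖ = 1) (J : C →ₗ[ℝ] V →ₗ[ℝ] V) (hJ1 : ∀ v : V, J e v = v)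
    (hJnorm : ∀ (ζ : C) (v : V), ‖J ζ v‖ = ‖ζ‖ * ‖v‖) (ζ : C) (hζ : ζ ≠ 0) (v : V) :
    J ζ (J ((‖ζ‖ ^ 2)⁻¹ • ((2 * ⟪ζ, e⟫) • e - ζ)) v) = v := by
  have key := jI2 e J hJ1 hJnorm ((2 * ⟪ζ, e⟫) • e - ζ) v
  rw [jconj_conj e he, jconj_norm e he] at key
  rw [map_smul, LinearMap.smul_apply, map_smul, key, smul_smul,
    inv_mul_cancel₀ (pow_ne_zero 2 (norm_ne_zero_iff.mpr hζ)), one_smul]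
end Aux2

section Aux3
variable {C V : Type*} [NormedAddCommGroup C] [InnerProductSpace ℝ C]
    [NormedAddCommGroup V] [InnerProductSpace ℝ V]

-- orthogonality to a J-line is preserved by J
theorem jperp (e : C) (J : C →ₗ[ℝ] V →ₗ[ℝ] V) (hJ1 : ∀ v : V, J e v = v)
    (hJnorm : ∀ (ζ : C) (v : V), ‖J ζ v‖ = ‖ζ‖ * ‖v‖)
    (hJ2 : ∀ (v : V) (ζ η : C), ∃ ξ : C, J ζ (J η v) = J ξ v)
    (b y : V) (hy : ∀ η : C, ⟪y, J η b⟫ = 0) (χ η : C) : ⟪J χ y, J η b⟫ = 0 := by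
  have h1 := jI1 e J hJ1 hJnorm χ y (J η b)
  obtain ⟨ξ, hξ⟩ := hJ2 b χ η
  rw [hξ, hy ξ, hy η] at h1
  linarith

theorem jperp2 (e : C) (he : ‖e‖ = 1) (J : C →ₗ[ℝ] V →ₗ[ℝ] V) (hJ1 : ∀ v : V, J e v = v)
    (hJnorm : ∀ (ζ : C) (v : V), ‖J ζ v‖ = ‖ζ‖ * ‖v‖)
    (hJ2 : ∀ (v : V) (ζ η : C), ∃ ξ : C, J ζ (J η v) = J ξ v)
    (b : V) (c : C) (hc : c ≠ 0) (m : V)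
    (hy : ∀ η : C, ⟪J c m, J η b⟫ = 0) (η : C) : ⟪m, J η b⟫ = 0 := by
  have hm : m = J ((‖c‖ ^ 2)⁻¹ • ((2 * ⟪c, e⟫) • e - c)) (J c m) := (jInv1 e J hJ1 hJnorm c hc m).symm
  rw [hm]
  exact jperp e J hJ1 hJnorm hJ2 b (J c m) hy _ η

variable (e : C) (J : C →ₗ[ℝ] V →ₗ[ℝ] V)

theorem rzero (hJ1 : ∀ v : V, J e v = v)
    (r : C × V → C × V → Prop)
    (hr : ∀ p q : C × V, r p q ↔
      ((p.1 = 0 ∧ q.1 = 0 ∧ ∃ ξ : C, p.2 = J ξ q.2) ∨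
       (p.1 ≠ 0 ∧ q.1 ≠ 0 ∧
         J ((‖p.1‖ ^ 2)⁻¹ • ((2 * ⟪p.1, e⟫) • e - p.1)) p.2 =
           J ((‖q.1‖ ^ 2)⁻¹ • ((2 * ⟪q.1, e⟫) • e - q.1)) q.2)))
    (p : C × V) (hp : r p 0) : p = 0 := by
  rw [hr] at hp
  rcases hp with ⟨h1, -, ξ, h2⟩ | ⟨-, h0, -⟩
  · have : p.2 = 0 := by simpa using h2
    exact Prod.ext h1 this
  · exact absurd rfl h0

theorem rrefl (hJ1 : ∀ v : V, J e v = v)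
    (r : C × V → C × V → Prop)
    (hr : ∀ p q : C × V, r p q ↔
      ((p.1 = 0 ∧ q.1 = 0 ∧ ∃ ξ : C, p.2 = J ξ q.2) ∨
       (p.1 ≠ 0 ∧ q.1 ≠ 0 ∧
         J ((‖p.1‖ ^ 2)⁻¹ • ((2 * ⟪p.1, e⟫) • e - p.1)) p.2 =
           J ((‖q.1‖ ^ 2)⁻¹ • ((2 * ⟪q.1, e⟫) • e - q.1)) q.2)))
    (x : C × V) : r x x := by
  rw [hr]
  by_cases hx : x.1 = 0
  · exact Or.inl ⟨hx, hx, e, (hJ1 x.2).symm⟩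
  · exact Or.inr ⟨hx, hx, rfl⟩

theorem rchar0 (r : C × V → C × V → Prop)
    (hr : ∀ p q : C × V, r p q ↔
      ((p.1 = 0 ∧ q.1 = 0 ∧ ∃ ξ : C, p.2 = J ξ q.2) ∨
       (p.1 ≠ 0 ∧ q.1 ≠ 0 ∧
         J ((‖p.1‖ ^ 2)⁻¹ • ((2 * ⟪p.1, e⟫) • e - p.1)) p.2 =
           J ((‖q.1‖ ^ 2)⁻¹ • ((2 * ⟪q.1, e⟫) • e - q.1)) q.2)))
    (p x : C × V) (hx : x.1 = 0) :
    r p x ↔ (p.1 = 0 ∧ ∃ ξ : C, p.2 = J ξ x.2) := by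
  rw [hr]
  constructor
  · rintro (⟨h1, -, h2⟩ | ⟨-, h0, -⟩)
    · exact ⟨h1, h2⟩
    · exact absurd hx h0
  · rintro ⟨h1, h2⟩
    exact Or.inl ⟨h1, hx, h2⟩

theorem rcharP (he : ‖e‖ = 1) (hJ1 : ∀ v : V, J e v = v)
    (hJnorm : ∀ (ζ : C) (v : V), ‖J ζ v‖ = ‖ζ‖ * ‖v‖)
    (r : C × V → C × V → Prop)
    (hr : ∀ p q : C × V, r p q ↔
      ((p.1 = 0 ∧ q.1 = 0 ∧ ∃ ξ : C, p.2 = J ξ q.2) ∨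
       (p.1 ≠ 0 ∧ q.1 ≠ 0 ∧
         J ((‖p.1‖ ^ 2)⁻¹ • ((2 * ⟪p.1, e⟫) • e - p.1)) p.2 =
           J ((‖q.1‖ ^ 2)⁻¹ • ((2 * ⟪q.1, e⟫) • e - q.1)) q.2)))
    (p x : C × V) (hx : x.1 ≠ 0) :
    r p x ↔ (p.1 ≠ 0 ∧
      p.2 = J p.1 (J ((‖x.1‖ ^ 2)⁻¹ • ((2 * ⟪x.1, e⟫) • e - x.1)) x.2)) := by
  rw [hr]
  constructor
  · rintro (⟨-, h0, -⟩ | ⟨h1, -, h2⟩)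
    · exact absurd h0 hx
    · refine ⟨h1, ?_⟩
      conv_lhs => rw [← jInv2 e he J hJ1 hJnorm p.1 h1 p.2]
      rw [h2]
  · rintro ⟨h1, h2⟩
    refine Or.inr ⟨h1, hx, ?_⟩
    rw [h2, jInv1 e J hJ1 hJnorm p.1 h1]
end Aux3

section S4b
variable {C V : Type*} [NormedAddCommGroup C] [InnerProductSpace ℝ C]
    [NormedAddCommGroup V] [InnerProductSpace ℝ V] [FiniteDimensional ℝ V]

theorem jmaster (e : C) (he : ‖e‖ = 1) (J : C →ₗ[ℝ] V →ₗ[ℝ] V)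
    (hJ1 : ∀ v : V, J e v = v)
    (hJnorm : ∀ (ζ : C) (v : V), ‖J ζ v‖ = ‖ζ‖ * ‖v‖)
    (hJ2 : ∀ (v : V) (ζ η : C), ∃ ξ : C, J ζ (J η v) = J ξ v)
    (r : C × V → C × V → Prop)
    (hr : ∀ p q : C × V, r p q ↔
      ((p.1 = 0 ∧ q.1 = 0 ∧ ∃ ξ : C, p.2 = J ξ q.2) ∨
       (p.1 ≠ 0 ∧ q.1 ≠ 0 ∧
         J ((‖p.1‖ ^ 2)⁻¹ • ((2 * ⟪p.1, e⟫) • e - p.1)) p.2 =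
           J ((‖q.1‖ ^ 2)⁻¹ • ((2 * ⟪q.1, e⟫) • e - q.1)) q.2)))
    (w x : C × V)
    (H : ∀ p : C × V, r p x → ⟪w.1, p.1⟫ + ⟪w.2, p.2⟫ = 0) :
    ∀ q p : C × V, r q w → r p x → ⟪q.1, p.1⟫ + ⟪q.2, p.2⟫ = 0 := by
  intro q p hq hp
  by_cases hw0 : w = 0
  · have : q = 0 := rzero e J hJ1 r hr q (hw0 ▸ hq)
    rw [this]
    simp
  by_cases hx1 : x.1 = 0
  · -- the line of x lies in {0} × V
    obtain ⟨hp1, η, hp2⟩ := (rchar0 e J r hr p x hx1).1 hp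
    have hyp2 : ∀ η' : C, ⟪w.2, J η' x.2⟫ = 0 := by
      intro η'
      have hr' : r (0, J η' x.2) x := (rchar0 e J r hr (0, J η' x.2) x hx1).2 ⟨rfl, η', rfl⟩
      have h := H _ hr'
      simpa using h
    rw [hp1, hp2, inner_zero_right]
    by_cases hw1 : w.1 = 0
    · obtain ⟨hq1, ξ, hq2⟩ := (rchar0 e J r hr q w hw1).1 hq
      rw [hq2]
      simpa using jperp e J hJ1 hJnorm hJ2 x.2 w.2 hyp2 ξ η
    · obtain ⟨hq1, hq2⟩ := (rcharP e J he hJ1 hJnorm r hr q w hw1).1 hq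
      set m := J ((‖w.1‖ ^ 2)⁻¹ • ((2 * ⟪w.1, e⟫) • e - w.1)) w.2 with hm_def
      have hw2 : J w.1 m = w.2 := jInv2 e he J hJ1 hJnorm w.1 hw1 w.2
      have hm : ∀ η' : C, ⟪m, J η' x.2⟫ = 0 := by
        refine jperp2 e he J hJ1 hJnorm hJ2 x.2 w.1 hw1 m ?_
        intro η'
        rw [hw2]
        exact hyp2 η'
      rw [hq2]
      simpa using jperp e J hJ1 hJnorm hJ2 x.2 m hm q.1 η
  · -- x.1 ≠ 0
    set u := J ((‖x.1‖ ^ 2)⁻¹ • ((2 * ⟪x.1, e⟫) • e - x.1)) x.2 with hu_def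
    obtain ⟨hp1, hp2⟩ := (rcharP e J he hJ1 hJnorm r hr p x hx1).1 hp
    have hypB : ∀ ζ : C, ⟪w.1, ζ⟫ + ⟪w.2, J ζ u⟫ = 0 := by
      intro ζ
      by_cases hζ : ζ = 0
      · rw [hζ]
        simp
      · exact H (ζ, J ζ u) ((rcharP e J he hJ1 hJnorm r hr (ζ, J ζ u) x hx1).2 ⟨hζ, rfl⟩)
    by_cases hw1 : w.1 = 0
    · have hyp2 : ∀ ζ : C, ⟪w.2, J ζ u⟫ = 0 := by
        intro ζ
        have h := hypB ζ
        rw [hw1] at h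
        simpa using h
      obtain ⟨hq1, ξ, hq2⟩ := (rchar0 e J r hr q w hw1).1 hq
      rw [hq1, hq2, hp2, ← hu_def, inner_zero_left, zero_add]
      exact jperp e J hJ1 hJnorm hJ2 u w.2 hyp2 ξ p.1
    · -- main case: both first components nonzero
      set m := J ((‖w.1‖ ^ 2)⁻¹ • ((2 * ⟪w.1, e⟫) • e - w.1)) w.2 with hm_def
      obtain ⟨hq1, hq2⟩ := (rcharP e J he hJ1 hJnorm r hr q w hw1).1 hq
      have hw2 : J w.1 m = w.2 := jInv2 e he J hJ1 hJnorm w.1 hw1 w.2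
      have hu : u ≠ 0 := by
        intro h0
        have h1 := hypB w.1
        rw [h0] at h1
        simp only [map_zero, inner_zero_right, add_zero] at h1
        exact hw1 ((@inner_self_eq_zero ℝ _ _ _ _ _).mp h1)
      have hunorm : ‖u‖ ^ 2 ≠ 0 := pow_ne_zero 2 (norm_ne_zero_iff.mpr hu)
      set U := LinearMap.range (J.flip u) with hU_def
      have hmem : m ∈ U ⊔ Uᗮ := by
        rw [Submodule.sup_orthogonal_of_hasOrthogonalProjection]
        trivial
      obtain ⟨m₀, hm₀, m₁, hm₁, hm01⟩ := Submodule.mem_sup.mp hmem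
      obtain ⟨μ, hμ⟩ := hm₀
      rw [LinearMap.flip_apply] at hμ
      have hm₁' : ∀ χ ζ : C, ⟪J χ m₁, J ζ u⟫ = 0 := by
        intro χ ζ
        refine jperp e J hJ1 hJnorm hJ2 u m₁ ?_ χ ζ
        intro η
        have hmem' : J η u ∈ U := ⟨η, by rw [LinearMap.flip_apply]⟩
        have h := (Submodule.mem_orthogonal _ m₁).1 hm₁ (J η u) hmem'
        rw [real_inner_comm]
        exact h
      choose ρ hρ using fun ηx : C => hJ2 u ηx μ
      have hρ' : ∀ η : C, J η m₀ = J (ρ η) u := by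
        intro η
        rw [← hμ, hρ]
      have hB : ∀ η ζ : C, ⟪J η m, J ζ u⟫ = ⟪ρ η, ζ⟫ * ‖u‖ ^ 2 := by
        intro η ζ
        rw [← hm01, map_add, inner_add_left, hm₁' η ζ, hρ' η, jP3 J hJnorm (ρ η) ζ u, add_zero]
      have hAc : w.1 + ‖u‖ ^ 2 • ρ w.1 = 0 := by
        apply (@inner_self_eq_zero ℝ _ _ _ _ _).mp
        have hz : ∀ ζ : C, ⟪w.1 + ‖u‖ ^ 2 • ρ w.1, ζ⟫ = 0 := by
          intro ζ
          rw [inner_add_left, real_inner_smul_left]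
          have h1 := hypB ζ
          rw [← hw2, hB w.1 ζ] at h1
          linarith
        exact hz _
      have hρc : ρ w.1 = -((‖u‖ ^ 2)⁻¹ • w.1) := by
        have h2 : ‖u‖ ^ 2 • ρ w.1 = -w.1 := eq_neg_of_add_eq_zero_right hAc
        calc ρ w.1 = (‖u‖ ^ 2)⁻¹ • (‖u‖ ^ 2 • ρ w.1) := by
              rw [smul_smul, inv_mul_cancel₀ hunorm, one_smul]
          _ = -((‖u‖ ^ 2)⁻¹ • w.1) := by rw [h2, smul_neg]
      have hρnorm : ∀ η : C, ‖ρ η‖ = ‖η‖ * ‖μ‖ := by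
        intro η
        have h1 : ‖J (ρ η) u‖ = ‖ρ η‖ * ‖u‖ := hJnorm _ _
        rw [← hρ η, hJnorm, hJnorm] at h1
        have hune : ‖u‖ ≠ 0 := norm_ne_zero_iff.mpr hu
        have h2 : ‖ρ η‖ * ‖u‖ = (‖η‖ * ‖μ‖) * ‖u‖ := by linear_combination -h1
        exact mul_right_cancel₀ hune h2
      have hμnorm : ‖μ‖ * ‖u‖ ^ 2 = 1 := by
        have h1 := hρnorm w.1
        rw [hρc] at h1
        have hwne : ‖w.1‖ ≠ 0 := norm_ne_zero_iff.mpr hw1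
        have habs : ‖(‖u‖ ^ 2)⁻¹‖ = (‖u‖ ^ 2)⁻¹ := by
          rw [Real.norm_eq_abs]
          exact abs_of_nonneg (by positivity)
        rw [norm_neg, norm_smul, habs] at h1
        have h2 : ‖w.1‖ * (‖μ‖ * ‖u‖ ^ 2) = ‖w.1‖ * 1 := by
          rw [mul_one, ← mul_assoc, ← h1, mul_comm ((‖u‖ ^ 2)⁻¹) ‖w.1‖, mul_assoc,
            inv_mul_cancel₀ hunorm, mul_one]
        exact mul_left_cancel₀ hwne h2
      have hmu : ⟪m, u⟫ = -1 := by
        have h1 := hypB w.1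
        rw [← hw2, jP1 J hJnorm w.1 m u, real_inner_self_eq_norm_sq] at h1
        have hwne : ‖w.1‖ ^ 2 ≠ 0 := pow_ne_zero 2 (norm_ne_zero_iff.mpr hw1)
        have h2 : ‖w.1‖ ^ 2 * (1 + ⟪m, u⟫) = 0 := by ring_nf; ring_nf at h1; linarith
        rcases mul_eq_zero.mp h2 with h3 | h3
        · exact absurd h3 hwne
        · linarith
      have hρinner : ∀ η : C, ⟪ρ η, η⟫ * ‖u‖ ^ 2 = -(‖η‖ ^ 2) := by
        intro η
        have h1 := hB η η
        have h2 := jP1 J hJnorm η m u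
        rw [hmu] at h2
        rw [h2] at h1
        linarith
      have hA : ∀ η : C, η + ‖u‖ ^ 2 • ρ η = 0 := by
        intro η
        apply (@inner_self_eq_zero ℝ _ _ _ _ _).mp
        rw [real_inner_add_add_self]
        simp only [real_inner_smul_left, real_inner_smul_right]
        have h1 := hρinner η
        have h2 : ⟪η, ρ η⟫ = ⟪ρ η, η⟫ := real_inner_comm _ _
        have h3 : ⟪ρ η, ρ η⟫ = (‖η‖ * ‖μ‖) ^ 2 := by
          rw [real_inner_self_eq_norm_sq, hρnorm]
        have h4 : ⟪η, η⟫ = ‖η‖ ^ 2 := real_inner_self_eq_norm_sq η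
        rw [h2, h3, h4]
        linear_combination 2 * h1 + (‖η‖ ^ 2 * (‖μ‖ * ‖u‖ ^ 2 + 1)) * hμnorm
      have key : ∀ η ζ : C, ⟪η, ζ⟫ + ⟪J η m, J ζ u⟫ = 0 := by
        intro η ζ
        rw [hB η ζ]
        have h1 : ‖u‖ ^ 2 • ρ η = -η := eq_neg_of_add_eq_zero_right (hA η)
        calc ⟪η, ζ⟫ + ⟪ρ η, ζ⟫ * ‖u‖ ^ 2
            = ⟪η, ζ⟫ + ⟪‖u‖ ^ 2 • ρ η, ζ⟫ := by rw [real_inner_smul_left]; ring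
          _ = ⟪η, ζ⟫ + ⟪-η, ζ⟫ := by rw [h1]
          _ = 0 := by rw [inner_neg_left]; ring
      rw [hq2, hp2]
      exact key q.1 p.1
end S4b

theorem stmt15 {C V : Type*} [NormedAddCommGroup C] [InnerProductSpace ℝ C]
    [FiniteDimensional ℝ C] [NormedAddCommGroup V] [InnerProductSpace ℝ V]
    [FiniteDimensional ℝ V]
    (e : C) (he : ‖e‖ = 1) (J : C →ₗ[ℝ] V →ₗ[ℝ] V)
    (hJ1 : ∀ v : V, J e v = v)
    (hJnorm : ∀ (ζ : C) (v : V), ‖J ζ v‖ = ‖ζ‖ * ‖v‖)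
    (hJ2 : ∀ (v : V) (ζ η : C), ∃ ξ : C, J ζ (J η v) = J ξ v)
    (r : C × V → C × V → Prop)
    (hr : ∀ p q : C × V, r p q ↔
      ((p.1 = 0 ∧ q.1 = 0 ∧ ∃ ξ : C, p.2 = J ξ q.2) ∨
       (p.1 ≠ 0 ∧ q.1 ≠ 0 ∧
         J ((‖p.1‖ ^ 2)⁻¹ • ((2 * ⟪p.1, e⟫) • e - p.1)) p.2 =
           J ((‖q.1‖ ^ 2)⁻¹ • ((2 * ⟪q.1, e⟫) • e - q.1)) q.2)))
    (E : Submodule ℝ (C × V))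
    (hE : ∀ w ∈ E, ∀ q : C × V, r q w → q ∈ E) :
    (∀ F : Submodule ℝ (C × V),
      (∀ p : C × V, p ∈ F ↔ ∀ q ∈ E, ⟪p.1, q.1⟫ + ⟪p.2, q.2⟫ = 0) →
      ∀ w ∈ F, ∀ q : C × V, r q w → q ∈ F) ∧
    (∃ (n : ℕ) (w : Fin n → C × V),
      (∀ i, w i ≠ 0 ∧ w i ∈ E) ∧
      (∀ i j, i ≠ j → ∀ p q : C × V, r p (w i) → r q (w j) →
        ⟪p.1, q.1⟫ + ⟪p.2, q.2⟫ = 0) ∧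
      E = Submodule.span ℝ (⋃ i, {p : C × V | r p (w i)})) := by
  classical
  constructor
  · intro F hF w hwF q hq
    rw [hF]
    intro x hxE
    have H : ∀ p : C × V, r p x → ⟪w.1, p.1⟫ + ⟪w.2, p.2⟫ = 0 := by
      intro p hp
      exact (hF w).1 hwF p (hE x hxE p hp)
    exact jmaster e he J hJ1 hJnorm hJ2 r hr w x H q x hq (rrefl e J hJ1 r hr x)
  · -- setup the L2 inner product structure on C × V
    let eqv : (C × V) ≃ₗ[ℝ] WithLp 2 (C × V) := (WithLp.linearEquiv 2 ℝ (C × V)).symm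
    haveI : FiniteDimensional ℝ (WithLp 2 (C × V)) := Module.Finite.equiv eqv
    have hinner : ∀ a b : C × V, (⟪eqv a, eqv b⟫ : ℝ) = ⟪a.1, b.1⟫ + ⟪a.2, b.2⟫ :=
      fun a b => rfl
    have hmemmap : ∀ (M : Submodule ℝ (WithLp 2 (C × V))) (z : C × V),
        z ∈ M.map (eqv.symm : WithLp 2 (C × V) →ₗ[ℝ] C × V) ↔ eqv z ∈ M := by
      intro M z
      constructor
      · rintro ⟨y, hy, rfl⟩
        simpa using hy
      · intro h
        exact ⟨eqv z, h, by simp⟩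
    have hmemmap' : ∀ (M : Submodule ℝ (C × V)) (z : C × V),
        eqv z ∈ M.map (eqv : (C × V) →ₗ[ℝ] WithLp 2 (C × V)) ↔ z ∈ M := by
      intro M z
      constructor
      · rintro ⟨y, hy, hyz⟩
        rwa [← eqv.injective hyz]
      · intro h
        exact ⟨z, h, rfl⟩
    have horth : ∀ (M : Submodule ℝ (C × V)) (z : C × V),
        (eqv z ∈ (M.map (eqv : (C × V) →ₗ[ℝ] WithLp 2 (C × V)))ᗮ) ↔
          ∀ y ∈ M, ⟪y.1, z.1⟫ + ⟪y.2, z.2⟫ = 0 := by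
      intro M z
      rw [Submodule.mem_orthogonal]
      constructor
      · intro h y hy
        have h2 := h (eqv y) (Submodule.mem_map_of_mem hy)
        rwa [hinner] at h2
      · intro h u hu
        obtain ⟨y, hy, rfl⟩ := hu
        exact h y hy
    have main : ∀ n : ℕ, ∀ E' : Submodule ℝ (C × V), Module.finrank ℝ E' = n →
        (∀ w ∈ E', ∀ q : C × V, r q w → q ∈ E') →
        ∃ (k : ℕ) (w : Fin k → C × V),
          (∀ i, w i ≠ 0 ∧ w i ∈ E') ∧
          (∀ i j, i ≠ j → ∀ p q : C × V, r p (w i) → r q (w j) →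
            ⟪p.1, q.1⟫ + ⟪p.2, q.2⟫ = 0) ∧
          E' = Submodule.span ℝ (⋃ i, {p : C × V | r p (w i)}) := by
      intro n
      induction n using Nat.strong_induction_on with
      | _ n IH =>
        intro E' hrank hE'
        by_cases hbot : E' = ⊥
        · refine ⟨0, Fin.elim0, fun i => i.elim0, fun i => i.elim0, ?_⟩
          rw [hbot, Set.iUnion_of_empty, Submodule.span_empty]
        · obtain ⟨w₀, hw₀E, hw₀ne⟩ := Submodule.exists_mem_ne_zero_of_ne_bot hbot
          set S₀ : Set (C × V) := {p | r p w₀} with hS₀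
          have hS₀E : S₀ ⊆ E' := fun p hp => hE' w₀ hw₀E p hp
          set L : Submodule ℝ (C × V) := Submodule.span ℝ S₀ with hL
          have hLE : L ≤ E' := Submodule.span_le.mpr hS₀E
          have hw₀L : w₀ ∈ L := Submodule.subset_span (rrefl e J hJ1 r hr w₀)
          set L₂ := L.map (eqv : (C × V) →ₗ[ℝ] WithLp 2 (C × V)) with hL₂
          set E₂ := E'.map (eqv : (C × V) →ₗ[ℝ] WithLp 2 (C × V)) with hE₂
          have hL₂E₂ : L₂ ≤ E₂ := Submodule.map_mono hLE
          set K := L₂ᗮ ⊓ E₂ with hK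
          set F' := K.map (eqv.symm : WithLp 2 (C × V) →ₗ[ℝ] C × V) with hF'
          have hmemF' : ∀ z : C × V, z ∈ F' ↔
              ((∀ y ∈ L, ⟪y.1, z.1⟫ + ⟪y.2, z.2⟫ = 0) ∧ z ∈ E') := by
            intro z
            rw [hF', hmemmap, hK, Submodule.mem_inf, hL₂, horth L z, hE₂, hmemmap']
          have hF'E : F' ≤ E' := fun z hz => ((hmemF' z).1 hz).2
          have hF'r : ∀ w ∈ F', ∀ q : C × V, r q w → q ∈ F' := by
            intro w hw q hq
            rw [hmemF'] at hw ⊢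
            obtain ⟨hw1, hw2⟩ := hw
            refine ⟨?_, hE' w hw2 q hq⟩
            have H : ∀ p' : C × V, r p' w₀ → ⟪w.1, p'.1⟫ + ⟪w.2, p'.2⟫ = 0 := by
              intro p' hp'
              have h := hw1 p' (Submodule.subset_span hp')
              linarith [real_inner_comm p'.1 w.1, real_inner_comm p'.2 w.2, h]
            have hqS : ∀ p ∈ S₀, ⟪p.1, q.1⟫ + ⟪p.2, q.2⟫ = 0 := by
              intro p hp
              have h := jmaster e he J hJ1 hJnorm hJ2 r hr w w₀ H q p hq hp
              linarith [real_inner_comm q.1 p.1, real_inner_comm q.2 p.2, h]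
            intro y hy
            refine Submodule.span_induction hqS (by simp) ?_ ?_ hy
            · intro a b _ _ ha hb
              simp only [Prod.fst_add, Prod.snd_add, inner_add_left]
              linarith
            · intro t a _ ha
              simp only [Prod.smul_fst, Prod.smul_snd, real_inner_smul_left]
              linear_combination t * ha
          have hrankE₂ : Module.finrank ℝ E₂ = n := by
            rw [hE₂, LinearEquiv.finrank_map_eq eqv E']
            exact hrank
          have hsup : L₂ ⊔ K = E₂ := Submodule.sup_orthogonal_inf_of_hasOrthogonalProjection hL₂E₂
          have hinf : L₂ ⊓ K = ⊥ := by
            rw [hK, ← inf_assoc, Submodule.inf_orthogonal_eq_bot, bot_inf_eq]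
          have hrank_sum : Module.finrank ℝ L₂ + Module.finrank ℝ K = n := by
            have h1 := Submodule.finrank_sup_add_finrank_inf_eq L₂ K
            rw [hsup, hinf, finrank_bot, add_zero, hrankE₂] at h1
            omega
          have hLpos : 0 < Module.finrank ℝ L₂ := by
            rcases Nat.eq_zero_or_pos (Module.finrank ℝ L₂) with h0 | h0
            · exfalso
              have hb : L₂ = ⊥ := Submodule.finrank_eq_zero.mp h0
              have hmem : eqv w₀ ∈ L₂ := Submodule.mem_map_of_mem hw₀L
              rw [hb, Submodule.mem_bot] at hmem
              exact hw₀ne (by simpa using (LinearEquiv.map_eq_zero_iff eqv).mp hmem)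
            · exact h0
          have hrankF' : Module.finrank ℝ F' = Module.finrank ℝ K := by
            rw [hF', LinearEquiv.finrank_map_eq eqv.symm K]
          obtain ⟨k, wv, hv1, hv2, hv3⟩ :=
            IH (Module.finrank ℝ F') (by omega) F' rfl hF'r
          -- the mixed orthogonality statement
          have hmix : ∀ j : Fin k, ∀ p' q' : C × V, r q' (wv j) → r p' w₀ →
              ⟪q'.1, p'.1⟫ + ⟪q'.2, p'.2⟫ = 0 := by
            intro j p' q' hq' hp'
            have hperpL := ((hmemF' (wv j)).1 (hv1 j).2).1
            have H : ∀ y : C × V, r y w₀ → ⟪(wv j).1, y.1⟫ + ⟪(wv j).2, y.2⟫ = 0 := by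
              intro y hy
              have h := hperpL y (Submodule.subset_span hy)
              linarith [real_inner_comm y.1 (wv j).1, real_inner_comm y.2 (wv j).2, h]
            exact jmaster e he J hJ1 hJnorm hJ2 r hr (wv j) w₀ H q' p' hq' hp'
          refine ⟨k + 1, Fin.cons w₀ wv, ?_, ?_, ?_⟩
          · intro i
            rcases Fin.eq_zero_or_eq_succ i with rfl | ⟨i', rfl⟩
            · rw [Fin.cons_zero]
              exact ⟨hw₀ne, hw₀E⟩
            · rw [Fin.cons_succ]
              exact ⟨(hv1 i').1, hF'E (hv1 i').2⟩
          · intro i j hij p q hp hq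
            rcases Fin.eq_zero_or_eq_succ i with rfl | ⟨i', rfl⟩
            · rcases Fin.eq_zero_or_eq_succ j with rfl | ⟨j', rfl⟩
              · exact absurd rfl hij
              · rw [Fin.cons_zero] at hp
                rw [Fin.cons_succ] at hq
                have h := hmix j' p q hq hp
                linarith [real_inner_comm q.1 p.1, real_inner_comm q.2 p.2, h]
            · rcases Fin.eq_zero_or_eq_succ j with rfl | ⟨j', rfl⟩
              · rw [Fin.cons_succ] at hp
                rw [Fin.cons_zero] at hq
                exact hmix i' q p hp hq
              · rw [Fin.cons_succ] at hp hq
                exact hv2 i' j' (fun h => hij (congrArg Fin.succ h)) p q hp hq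
          · have hmapF' : F'.map (eqv : (C × V) →ₗ[ℝ] WithLp 2 (C × V)) = K := by
              ext zz
              constructor
              · rintro ⟨y, hy, rfl⟩
                exact (hmemmap K y).1 hy
              · intro hz
                exact ⟨eqv.symm zz, (hmemmap K _).2 (by simpa using hz), by simp⟩
            have hsupCV : L ⊔ F' = E' := by
              apply Submodule.map_injective_of_injective
                (f := (eqv : (C × V) →ₗ[ℝ] WithLp 2 (C × V)))
                (fun a b hab => eqv.injective hab)
              rw [Submodule.map_sup, hmapF', ← hL₂, ← hE₂]
              exact hsup
            have hunion : (⋃ i, {p : C × V | r p ((Fin.cons w₀ wv : Fin (k+1) → C × V) i)})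
                = S₀ ∪ ⋃ i, {p : C × V | r p (wv i)} := by
              ext z
              simp only [Set.mem_iUnion, Set.mem_union, Set.mem_setOf_eq, hS₀]
              constructor
              · rintro ⟨i, hi⟩
                rcases Fin.eq_zero_or_eq_succ i with rfl | ⟨i', rfl⟩
                · left
                  rwa [Fin.cons_zero] at hi
                · right
                  exact ⟨i', by rwa [Fin.cons_succ] at hi⟩
              · rintro (h | ⟨i, hi⟩)
                · exact ⟨0, by rwa [Fin.cons_zero]⟩
                · exact ⟨i.succ, by rwa [Fin.cons_succ]⟩
            rw [hunion, Submodule.span_union, ← hL, ← hv3, hsupCV]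
    obtain ⟨k, wv, h1, h2, h3⟩ := main (Module.finrank ℝ E) E rfl hE
    exact ⟨k, wv, h1, h2, h3⟩
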